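/- Let ℍ denote the real quaternions with imaginary units i, j, k, let n ≥ 1, let a, b, c ∈ ℝ, and let w : Fin n → ℍ. Define matrices A, B of size (n+1)×(n+1) over ℍ by: A has entry a·i in position (n,n) and zeros elsewhere; B has entry b·j + c·k in position (n,n), entry w(l) in position (l,n) and entry −conj(w(l)) in position (n,l) for each l < n, and zeros elsewhere. Then the commutator A·B − B·A = 0 if and only if a = 0, or (b = 0 and c = 0 and w = 0). -/

import Mathlib

open Matrix

/-- The quaternion imaginary unit `i`. -/
noncomputable def qi : Quaternion ℝ := ⟨0, 1, 0, 0⟩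

/-- The quaternion imaginary unit `j`. -/
noncomputable def qj : Quaternion ℝ := ⟨0, 0, 1, 0⟩

/-- The quaternion imaginary unit `k`. -/
noncomputable def qk : Quaternion ℝ := ⟨0, 0, 0, 1⟩

/-- **Bracket relation for `S^{4n+3} = Sp(n+1)U(1)/Sp(n)U(1)`.**
Let `A` be the quaternionic `(n+1)×(n+1)` matrix with entry `a·i` in the corner position
`(n,n)` and zeros elsewhere, and `B` the matrix with entry `b·j + c·k` in position `(n,n)`,
entries `w(l)` in positions `(l,n)` and `−conj(w(l))` in positions `(n,l)` for `l < n`,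
and zeros elsewhere.  Then `A·B − B·A = 0` if and only if `a = 0`, or
`b = 0 ∧ c = 0 ∧ w = 0`. -/
theorem commutator_eq_zero_iff
    (n : ℕ) (hn : 1 ≤ n) (a b c : ℝ) (w : Fin n → Quaternion ℝ)
    (A B : Matrix (Fin (n + 1)) (Fin (n + 1)) (Quaternion ℝ))
    (hA : A = Matrix.of fun p q =>
      if p = Fin.last n ∧ q = Fin.last n then a • qi else 0)
    (hB : B = Matrix.of fun p q =>
      if hp : p = Fin.last n then
        (if hq : q = Fin.last n then b • qj + c • qk else -star (w (q.castPred hq)))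
      else (if q = Fin.last n then w (p.castPred hp) else 0)) :
    A * B - B * A = 0 ↔ a = 0 ∨ (b = 0 ∧ c = 0 ∧ w = 0) := by
  have hAB : ∀ p q, (A * B) p q =
      (if p = Fin.last n then (a • qi) * B (Fin.last n) q else 0) := by
    intro p q
    rw [Matrix.mul_apply, Finset.sum_eq_single (Fin.last n)]
    · by_cases hp : p = Fin.last n <;> simp [hA, hp]
    · intro r _ hr; simp [hA, hr]
    · simp
  have hBA : ∀ p q, (B * A) p q =
      (if q = Fin.last n then B p (Fin.last n) * (a • qi) else 0) := by
    intro p q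
    rw [Matrix.mul_apply, Finset.sum_eq_single (Fin.last n)]
    · by_cases hq : q = Fin.last n <;> simp [hA, hq]
    · intro r _ hr; simp [hA, hr]
    · simp
  constructor
  · intro h
    have key : ∀ p q, (A * B) p q = (B * A) p q := by
      intro p q
      have := sub_eq_zero.mp h
      rw [this]
    by_cases ha : a = 0
    · exact Or.inl ha
    right
    have hcorner := key (Fin.last n) (Fin.last n)
    rw [hAB, hBA] at hcorner
    simp only [if_pos rfl, hB, Matrix.of_apply, dif_pos rfl] at hcorner
    have hbc : a * b = 0 ∧ a * c = 0 := by
      have := hcorner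
      simp [Quaternion.ext_iff, show qi.re = 0 from rfl, show qi.imI = 1 from rfl, show qi.imJ = 0 from rfl, show qi.imK = 0 from rfl, show qj.re = 0 from rfl, show qj.imI = 0 from rfl, show qj.imJ = 1 from rfl, show qj.imK = 0 from rfl, show qk.re = 0 from rfl, show qk.imI = 0 from rfl, show qk.imJ = 0 from rfl, show qk.imK = 1 from rfl] at this
      constructor <;> nlinarith [this.1, this.2]
    have hb : b = 0 := by
      rcases mul_eq_zero.mp hbc.1 with h | h
      · exact absurd h ha
      · exact h
    have hc : c = 0 := by
      rcases mul_eq_zero.mp hbc.2 with h | h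
      · exact absurd h ha
      · exact h
    refine ⟨hb, hc, funext fun l => ?_⟩
    have hl : (l.castSucc : Fin (n + 1)) ≠ Fin.last n := (Fin.castSucc_lt_last l).ne
    have hw := key l.castSucc (Fin.last n)
    rw [hAB, hBA] at hw
    rw [if_neg hl, if_pos rfl] at hw
    simp only [hB, Matrix.of_apply, dif_neg hl, if_pos rfl] at hw
    have hqi : (a • qi : Quaternion ℝ) ≠ 0 := by
      refine smul_ne_zero ha ?_
      intro h0; have := congrArg QuaternionAlgebra.imI h0; simp [show qi.imI = 1 from rfl, Quaternion.imI_zero] at this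
    have := mul_eq_zero.mp hw.symm
    simp only [Fin.castPred_castSucc] at this
    rcases this with h | h
    · exact h
    · exact absurd h hqi
  · intro h
    rcases h with ha | ⟨hb, hc, hw⟩
    · have : A = 0 := by
        refine Matrix.ext fun p q => ?_
        subst hA ha
        simp
      rw [this, Matrix.zero_mul, Matrix.mul_zero, sub_zero]
    · have : B = 0 := by
        refine Matrix.ext fun p q => ?_
        subst hB hb hc hw
        by_cases hp : p = Fin.last n <;> by_cases hq : q = Fin.last n <;>
          simp [hp, hq]
      rw [this, Matrix.zero_mul, Matrix.mul_zero, sub_zero]
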